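/- Every rule derived by the (EVOLVE) inference from a guarded TGD τ (in variable and head normal form, with body width ≤ w_b and head width ≤ w_h) and a guarded full TGD τ' (with the same bounds) is again a guarded TGD in head normal form whose body width is at most w_b and whose head width is at most w_h. In particular, the derived rule κ = β''→ ∃y⃗ η'' with β'' = (β ∪ (β' \ {B₁',…,Bₙ'}))θ and η'' = (η ∪ η')θ satisfies vars(β'') = vars(βθ), vars(η'') = vars(ηθ), and the guard of τ (instantiated by θ) guards κ. -/

import Mathlib

/-! The (EVOLVE) inference preserves guardedness, head normal form structure
and the width bounds. -/

namespace Stmt12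

inductive FOTerm (V C F : Type) : Type where
  | var : V → FOTerm V C F
  | const : C → FOTerm V C F
  | func : F → List (FOTerm V C F) → FOTerm V C F

variable {V C F : Type}

def FOTerm.subst (σ : V → FOTerm V C F) : FOTerm V C F → FOTerm V C F
  | .var x => σ x
  | .const c => .const c
  | .func f ts => .func f (ts.attach.map fun ⟨t, _⟩ => t.subst σ)

def FOTerm.vars : FOTerm V C F → Set V
  | .var x => {x}
  | .const _ => ∅
  | .func _ ts => ((ts.attach.map fun ⟨t, _⟩ => t.vars).foldr (· ∪ ·) ∅)

/-- A term is function-free when it is a variable or a constant. -/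
def FOTerm.NoFunc : FOTerm V C F → Prop
  | .func _ _ => False
  | _ => True

structure FOAtom (V C F R : Type) (ar : R → ℕ) where
  rel : R
  args : Fin (ar rel) → FOTerm V C F

variable {R : Type} {ar : R → ℕ}

def FOAtom.subst (σ : V → FOTerm V C F) (A : FOAtom V C F R ar) : FOAtom V C F R ar :=
  ⟨A.rel, fun i => (A.args i).subst σ⟩

def FOAtom.vars (A : FOAtom V C F R ar) : Set V := ⋃ i, (A.args i).vars

def FOAtom.NoFunc (A : FOAtom V C F R ar) : Prop := ∀ i, (A.args i).NoFunc

/-- The variables of a set of atoms. -/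
def varsOf (S : Set (FOAtom V C F R ar)) : Set V := ⋃ A ∈ S, FOAtom.vars A



lemma term_vars_subst (θ : V → FOTerm V C F) (t : FOTerm V C F) (h : t.NoFunc) :
    (t.subst θ).vars = ⋃ x ∈ t.vars, (θ x).vars := by
  cases t with
  | var x => simp [FOTerm.subst, FOTerm.vars]
  | const c => simp [FOTerm.subst, FOTerm.vars]
  | func f ts => exact absurd h (by simp [FOTerm.NoFunc])

lemma atom_subst_vars (θ : V → FOTerm V C F) (A : FOAtom V C F R ar) (h : A.NoFunc) :
    (A.subst θ).vars = ⋃ x ∈ A.vars, (θ x).vars := by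
  show (⋃ i, ((A.args i).subst θ).vars) = ⋃ x ∈ ⋃ i, (A.args i).vars, (θ x).vars
  ext v
  simp only [Set.mem_iUnion, exists_prop]
  constructor
  · rintro ⟨i, hv⟩
    rw [term_vars_subst θ _ (h i)] at hv
    simp only [Set.mem_iUnion, exists_prop] at hv
    obtain ⟨x, hx, hv⟩ := hv
    exact ⟨x, ⟨i, hx⟩, hv⟩
  · rintro ⟨x, ⟨i, hx⟩, hv⟩
    refine ⟨i, ?_⟩
    rw [term_vars_subst θ _ (h i)]
    simp only [Set.mem_iUnion, exists_prop]
    exact ⟨x, hx, hv⟩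

lemma biUnion_subst_vars (θ : V → FOTerm V C F) (L : List (FOAtom V C F R ar))
    (h : ∀ A ∈ L, A.NoFunc) :
    (⋃ A ∈ L, ((A.subst θ).vars)) = ⋃ x ∈ (⋃ A ∈ L, FOAtom.vars A), (θ x).vars := by
  ext v
  simp only [Set.mem_iUnion, exists_prop]
  constructor
  · rintro ⟨A, hA, hv⟩
    rw [atom_subst_vars θ A (h A hA)] at hv
    simp only [Set.mem_iUnion, exists_prop] at hv
    obtain ⟨x, hx, hv⟩ := hv
    exact ⟨x, ⟨A, hA, hx⟩, hv⟩
  · rintro ⟨x, ⟨A, hA, hx⟩, hv⟩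
    refine ⟨A, hA, ?_⟩
    rw [atom_subst_vars θ A (h A hA)]
    simp only [Set.mem_iUnion, exists_prop]
    exact ⟨x, hx, hv⟩

lemma subst_vars_mono (θ : V → FOTerm V C F) {A : FOAtom V C F R ar} (hA : A.NoFunc)
    {S : Set V} (h : A.vars ⊆ S) :
    (A.subst θ).vars ⊆ ⋃ x ∈ S, (θ x).vars := by
  rw [atom_subst_vars θ A hA]
  exact Set.biUnion_mono h fun _ _ => subset_rfl

lemma term_vars_finite (t : FOTerm V C F) (h : t.NoFunc) : t.vars.Finite := by
  cases t with
  | var x => simp only [FOTerm.vars]; exact Set.finite_singleton x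
  | const c => simp only [FOTerm.vars]; exact Set.finite_empty
  | func f ts => exact absurd h (by simp [FOTerm.NoFunc])

lemma atom_vars_finite (A : FOAtom V C F R ar) (h : A.NoFunc) : A.vars.Finite :=
  Set.finite_iUnion fun i => term_vars_finite _ (h i)

lemma list_vars_finite (L : List (FOAtom V C F R ar)) (h : ∀ A ∈ L, A.NoFunc) :
    (⋃ A ∈ L, FOAtom.vars A).Finite :=
  Set.Finite.biUnion L.finite_toSet fun A hA => atom_vars_finite A (h A hA)

lemma subst_noFunc (θ : V → FOTerm V C F) (hθ : ∀ x, (θ x).NoFunc)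
    {A : FOAtom V C F R ar} (hA : A.NoFunc) : (A.subst θ).NoFunc := by
  intro i
  show ((A.args i).subst θ).NoFunc
  cases h : A.args i with
  | var x => simp only [FOTerm.subst]; exact hθ x
  | const c => simp only [FOTerm.subst]; trivial
  | func f ts => exact absurd (h ▸ hA i) (by simp [FOTerm.NoFunc])


open Classical in
noncomputable def collapse (θ : V → FOTerm V C F) : FOTerm V C F → FOTerm V C F := fun t =>
  if h : ∃ c, t = FOTerm.const c then FOTerm.const h.choose
  else if h2 : ∃ u, θ u = t then FOTerm.var h2.choose
  else t

lemma collapse_const (θ : V → FOTerm V C F) (c : C) :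
    collapse θ (FOTerm.const c) = FOTerm.const c := by
  have h : ∃ c', (FOTerm.const c : FOTerm V C F) = FOTerm.const c' := ⟨c, rfl⟩
  rw [collapse, dif_pos h]
  exact h.choose_spec.symm

lemma collapse_func (θ : V → FOTerm V C F) (x : V) (f : F) (ts : List (FOTerm V C F))
    (hx : θ x = FOTerm.func f ts) :
    ∃ u, collapse θ (FOTerm.func f ts) = FOTerm.var u := by
  have hnc : ¬ ∃ c, (FOTerm.func f ts : FOTerm V C F) = FOTerm.const c := by
    rintro ⟨c, hc⟩; exact nomatch hc
  have hex : ∃ u, θ u = FOTerm.func f ts := ⟨x, hx⟩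
  rw [collapse, dif_neg hnc, dif_pos hex]
  exact ⟨_, rfl⟩

lemma mgu_noFunc {n : ℕ} (H B' : Fin n → FOAtom V C F R ar)
    (hHff : ∀ i, (H i).NoFunc) (hB'ff : ∀ i, (B' i).NoFunc)
    (θ : V → FOTerm V C F)
    (hunif : ∀ i, (H i).subst θ = (B' i).subst θ)
    (hmgu : ∀ σ : V → FOTerm V C F, (∀ i, (H i).subst σ = (B' i).subst σ) →
      ∃ δ : V → FOTerm V C F, ∀ x : V, (θ x).subst δ = σ x) :
    ∀ x, (θ x).NoFunc := by
  classical
  set σ : V → FOTerm V C F := fun x => collapse θ (θ x) with hσ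
  have hFσ : ∀ A : FOAtom V C F R ar, A.NoFunc →
      A.subst σ = ⟨(A.subst θ).rel, fun i => collapse θ ((A.subst θ).args i)⟩ := by
    intro A hA
    show (⟨A.rel, fun i => (A.args i).subst σ⟩ : FOAtom V C F R ar)
        = ⟨A.rel, fun i => collapse θ ((A.args i).subst θ)⟩
    have harg : (fun i => (A.args i).subst σ) = fun i => collapse θ ((A.args i).subst θ) := by
      funext i
      cases h : A.args i with
      | var x => simp only [FOTerm.subst]; rfl
      | const c => simp only [FOTerm.subst]; exact (collapse_const θ c).symm
      | func f ts => exact absurd (h ▸ hA i) (by simp [FOTerm.NoFunc])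
    rw [harg]
  have hu : ∀ i, (H i).subst σ = (B' i).subst σ := by
    intro i
    rw [hFσ _ (hHff i), hFσ _ (hB'ff i), hunif i]
  obtain ⟨δ, hδ⟩ := hmgu σ hu
  intro x
  cases hx : θ x with
  | var u => trivial
  | const c => trivial
  | func f ts =>
    exfalso
    have h1 : (FOTerm.func f ts).subst δ = σ x := by rw [← hx]; exact hδ x
    obtain ⟨u, hu2⟩ := collapse_func θ x f ts hx
    rw [hσ] at h1
    simp only at h1
    rw [hx, hu2] at h1
    simp only [FOTerm.subst] at h1
    exact nomatch h1


/-- Any rule `κ = β'' → ∃y⃗ η''` derived by an (EVOLVE) inference from a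
guarded TGD `τ = β → ∃y⃗ η` (in head normal form, with guard `G`, body width
`≤ w_b` and head width `≤ w_h`) and a guarded full TGD `τ' = β' → η'` (with
guard `G'`), where `β'' = (β ∪ (β' \ {B₁',…,Bₙ'}))θ` and `η'' = (η ∪ η')θ`, is
again a guarded function-free TGD with `vars(β'') = vars(βθ)`,
`vars(η'') = vars(ηθ)`, guard `Gθ`, body width `≤ w_b` and head width
`≤ w_h`. -/
theorem evolve_resolvent_properties {n : ℕ} (hn : 0 < n) (Y : Set V)
    (β η β' η' : List (FOAtom V C F R ar))
    -- all atoms are function-free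
    (hff : ∀ A, (A ∈ β ∨ A ∈ η ∨ A ∈ β' ∨ A ∈ η') → A.NoFunc)
    -- τ is a TGD: head variables occur in the body or among `y⃗`
    (hτvars : ∀ A ∈ η, A.vars ⊆ (⋃ B ∈ β, FOAtom.vars B) ∪ Y)
    -- the existential variables are disjoint from the body variables
    (hXY : Disjoint (⋃ B ∈ β, FOAtom.vars B) Y)
    -- τ and τ' use distinct variables
    (hdisj : Disjoint ((⋃ B ∈ β, FOAtom.vars B) ∪ Y) (⋃ B ∈ β', FOAtom.vars B))
    -- `G` is a guard of `τ`, `G'` a guard of `τ'`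
    (G : FOAtom V C F R ar) (hGmem : G ∈ β) (hG : ∀ B ∈ β, B.vars ⊆ G.vars)
    (G' : FOAtom V C F R ar) (hG'mem : G' ∈ β') (hG' : ∀ B ∈ β', B.vars ⊆ G'.vars)
    -- τ' is full: its head variables occur in its body
    (hfull : ∀ A ∈ η', A.vars ⊆ ⋃ B ∈ β', FOAtom.vars B)
    -- τ is in head normal form: every head atom contains an existential variable
    (hHNF : ∀ H ∈ η, (H.vars ∩ Y).Nonempty)
    -- the resolved atoms
    (H : Fin n → FOAtom V C F R ar) (B' : Fin n → FOAtom V C F R ar)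
    (hH : ∀ i, H i ∈ η) (hB' : ∀ i, B' i ∈ β')
    (θ : V → FOTerm V C F)
    -- θ is an mgu of the selected atoms that is the identity on `y⃗`
    (hunif : ∀ i, (H i).subst θ = (B' i).subst θ)
    (hidY : ∀ y ∈ Y, θ y = FOTerm.var y)
    (hmgu : ∀ σ : V → FOTerm V C F, (∀ i, (H i).subst σ = (B' i).subst σ) →
      ∃ δ : V → FOTerm V C F, ∀ x : V, (θ x).subst δ = σ x)
    -- the existential variable check
    (hevc₁ : ∀ B ∈ β', ((B.subst θ).vars ∩ Y).Nonempty → ∃ i, B = B' i)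
    (hevc₂ : ∀ B ∈ β, ∀ x ∈ FOAtom.vars B, (θ x).vars ∩ Y = ∅)
    -- width bounds on τ and τ'
    (wb wh : ℕ)
    (hwb : (⋃ B ∈ β, FOAtom.vars B).ncard ≤ wb)
    (hwh : (⋃ A ∈ η, FOAtom.vars A).ncard ≤ wh)
    (hwb' : (⋃ B ∈ β', FOAtom.vars B).ncard ≤ wb)
    (hwh' : (⋃ A ∈ η', FOAtom.vars A).ncard ≤ wh)
    -- the derived rule κ = β'' → ∃y⃗ η''
    (Bset Hset : Set (FOAtom V C F R ar))
    (hBset : Bset = {A | ∃ B ∈ β, A = B.subst θ} ∪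
      {A | ∃ B ∈ β', (∀ i, B ≠ B' i) ∧ A = B.subst θ})
    (hHset : Hset = {A | ∃ D ∈ η, A = D.subst θ} ∪ {A | ∃ D ∈ η', A = D.subst θ}) :
    -- conclusions
    varsOf Bset = ⋃ B ∈ β, ((B.subst θ).vars) ∧
    varsOf Hset = ⋃ D ∈ η, ((D.subst θ).vars) ∧
    (G.subst θ ∈ Bset ∧ varsOf Bset ⊆ (G.subst θ).vars) ∧
    varsOf Hset ⊆ varsOf Bset ∪ Y ∧
    (varsOf Bset).ncard ≤ wb ∧ (varsOf Hset).ncard ≤ wh ∧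
    (∀ A, (A ∈ Bset ∨ A ∈ Hset) → A.NoFunc) := by
  classical
  -- function-freeness of the original atoms
  have hffβ : ∀ B ∈ β, FOAtom.NoFunc B := fun B h => hff B (Or.inl h)
  have hffη : ∀ A ∈ η, FOAtom.NoFunc A := fun A h => hff A (Or.inr (Or.inl h))
  have hffβ' : ∀ B ∈ β', FOAtom.NoFunc B := fun B h => hff B (Or.inr (Or.inr (Or.inl h)))
  have hffη' : ∀ A ∈ η', FOAtom.NoFunc A := fun A h => hff A (Or.inr (Or.inr (Or.inr h)))
  -- θ is function-free
  have hθff : ∀ x, (θ x).NoFunc :=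
    mgu_noFunc H B' (fun i => hffη _ (hH i)) (fun i => hffβ' _ (hB' i)) θ hunif hmgu
  -- abbreviations
  have e1 : (⋃ B ∈ β, ((B.subst θ).vars)) = ⋃ x ∈ (⋃ B ∈ β, FOAtom.vars B), (θ x).vars :=
    biUnion_subst_vars θ β hffβ
  have e2 : (⋃ D ∈ η, ((D.subst θ).vars)) = ⋃ x ∈ (⋃ D ∈ η, FOAtom.vars D), (θ x).vars :=
    biUnion_subst_vars θ η hffη
  -- Lemma A : vars(B'ᵢθ) ⊆ vars(βθ) ∪ Y
  have hA : ∀ i, ((B' i).subst θ).vars ⊆ (⋃ B ∈ β, ((B.subst θ).vars)) ∪ Y := by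
    intro i v hv
    rw [← hunif i, atom_subst_vars θ _ (hffη _ (hH i))] at hv
    simp only [Set.mem_iUnion, exists_prop] at hv
    obtain ⟨x, hx, hv⟩ := hv
    rcases hτvars _ (hH i) hx with hxβ | hxY
    · left
      rw [e1]
      exact Set.mem_biUnion hxβ hv
    · right
      rw [hidY x hxY] at hv
      have : v = x := by simpa [FOTerm.vars] using hv
      exact this ▸ hxY
  -- every atom of β' is guarded by G' after substitution
  have hsubG' : ∀ B ∈ β', ((B.subst θ).vars) ⊆ ((G'.subst θ).vars) := by
    intro B hB
    rw [atom_subst_vars θ B (hffβ' B hB), atom_subst_vars θ G' (hffβ' G' hG'mem)]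
    exact Set.biUnion_mono (hG' B hB) fun _ _ => subset_rfl
  -- G' is one of the resolved atoms
  have i0 : Fin n := ⟨0, hn⟩
  obtain ⟨y, hyH, hyY⟩ := hHNF (H i0) (hH i0)
  have hyin : y ∈ ((H i0).subst θ).vars := by
    rw [atom_subst_vars θ _ (hffη _ (hH i0))]
    simp only [Set.mem_iUnion, exists_prop]
    exact ⟨y, hyH, by simp [hidY y hyY, FOTerm.vars]⟩
  obtain ⟨i1, hi1⟩ : ∃ i, G' = B' i := by
    apply hevc₁ G' hG'mem
    refine ⟨y, ?_, hyY⟩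
    apply hsubG' _ (hB' i0)
    rw [← hunif i0]
    exact hyin
  have hG'θ : (G'.subst θ).vars ⊆ (⋃ B ∈ β, ((B.subst θ).vars)) ∪ Y := by
    rw [hi1]; exact hA i1
  -- Lemma C : every atom of β' lands in vars(βθ) ∪ Y
  have hC : ∀ B ∈ β', ((B.subst θ).vars) ⊆ (⋃ B ∈ β, ((B.subst θ).vars)) ∪ Y :=
    fun B hB => (hsubG' B hB).trans hG'θ
  -- Lemma D : unresolved atoms of β' land in vars(βθ)
  have hD : ∀ B ∈ β', (∀ i, B ≠ B' i) → ((B.subst θ).vars) ⊆ ⋃ B ∈ β, ((B.subst θ).vars) := by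
    intro B hB hne v hv
    rcases hC B hB hv with h | h
    · exact h
    · obtain ⟨i, hi⟩ := hevc₁ B hB ⟨v, hv, h⟩
      exact absurd hi (hne i)
  -- Conclusion 1
  have c1 : varsOf Bset = ⋃ B ∈ β, ((B.subst θ).vars) := by
    rw [hBset]
    unfold varsOf
    apply subset_antisymm
    · intro v hv
      simp only [Set.mem_iUnion, exists_prop] at hv
      obtain ⟨A, hA', hv⟩ := hv
      simp only [Set.mem_union, Set.mem_setOf_eq] at hA'
      rcases hA' with ⟨B, hB, rfl⟩ | ⟨B, hB, hne, rfl⟩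
      · exact Set.mem_biUnion hB hv
      · exact hD B hB hne hv
    · intro v hv
      simp only [Set.mem_iUnion, exists_prop] at hv
      obtain ⟨B, hB, hv⟩ := hv
      exact Set.mem_biUnion (Set.mem_union_left _ ⟨B, hB, rfl⟩) hv
  -- the atoms of η' land (after θ) inside vars(ηθ)
  have hη'sub : ∀ D ∈ η', ((D.subst θ).vars) ⊆ ⋃ D ∈ η, ((D.subst θ).vars) := by
    intro D hD'
    have h1 : D.vars ⊆ G'.vars := (hfull D hD').trans (Set.iUnion₂_subset hG')
    have h2 : ((D.subst θ).vars) ⊆ ((G'.subst θ).vars) := by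
      rw [atom_subst_vars θ D (hffη' D hD'), atom_subst_vars θ G' (hffβ' G' hG'mem)]
      exact Set.biUnion_mono h1 fun _ _ => subset_rfl
    refine h2.trans ?_
    rw [hi1, ← hunif i1]
    exact Set.subset_biUnion_of_mem (u := fun D => ((FOAtom.subst θ D).vars)) (hH i1)
  -- Conclusion 2
  have c2 : varsOf Hset = ⋃ D ∈ η, ((D.subst θ).vars) := by
    rw [hHset]
    unfold varsOf
    apply subset_antisymm
    · intro v hv
      simp only [Set.mem_iUnion, exists_prop] at hv
      obtain ⟨A, hA', hv⟩ := hv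
      simp only [Set.mem_union, Set.mem_setOf_eq] at hA'
      rcases hA' with ⟨D, hDm, rfl⟩ | ⟨D, hDm, rfl⟩
      · exact Set.mem_biUnion hDm hv
      · exact hη'sub D hDm hv
    · intro v hv
      simp only [Set.mem_iUnion, exists_prop] at hv
      obtain ⟨D, hDm, hv⟩ := hv
      exact Set.mem_biUnion (Set.mem_union_left _ ⟨D, hDm, rfl⟩) hv
  -- Conclusion 3
  have c3a : G.subst θ ∈ Bset := by
    rw [hBset]; exact Set.mem_union_left _ ⟨G, hGmem, rfl⟩
  have c3b : varsOf Bset ⊆ (G.subst θ).vars := by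
    rw [c1, e1, atom_subst_vars θ G (hffβ G hGmem)]
    exact Set.biUnion_mono (Set.iUnion₂_subset hG) fun _ _ => subset_rfl
  -- Conclusion 4
  have c4 : varsOf Hset ⊆ varsOf Bset ∪ Y := by
    rw [c1, c2, e2]
    intro v hv
    simp only [Set.mem_iUnion, exists_prop] at hv
    obtain ⟨x, ⟨D, hDm, hx⟩, hv⟩ := hv
    rcases hτvars D hDm hx with hxβ | hxY
    · left
      rw [e1]
      exact Set.mem_biUnion hxβ hv
    · right
      rw [hidY x hxY] at hv
      have : v = x := by simpa [FOTerm.vars] using hv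
      exact this ▸ hxY
  -- cardinalities
  have hβfin : (⋃ B ∈ β, FOAtom.vars B).Finite := list_vars_finite β hffβ
  have hηfin : (⋃ D ∈ η, FOAtom.vars D).Finite := list_vars_finite η hffη
  have hg0 : ∀ x : V, ∃ u : V, (θ x).vars ⊆ {u} := by
    intro x
    cases hx : θ x with
    | var u => exact ⟨u, by simp [FOTerm.vars]⟩
    | const c => exact ⟨x, by simp [FOTerm.vars]⟩
    | func f ts => exact absurd (hx ▸ hθff x) (by simp [FOTerm.NoFunc])
  choose g hg0 using hg0
  have hg : ∀ x v, v ∈ (θ x).vars → v = g x := fun x v hv =>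
    Set.mem_singleton_iff.mp (hg0 x hv)
  have hcard : ∀ (L : List (FOAtom V C F R ar)) (hL : ∀ A ∈ L, A.NoFunc) (w : ℕ),
      (⋃ A ∈ L, FOAtom.vars A).ncard ≤ w →
      (⋃ A ∈ L, ((A.subst θ).vars)).ncard ≤ w := by
    intro L hL w hw
    have hfin : (⋃ A ∈ L, FOAtom.vars A).Finite := list_vars_finite L hL
    have hsub : (⋃ A ∈ L, ((A.subst θ).vars)) ⊆ g '' (⋃ A ∈ L, FOAtom.vars A) := by
      rw [biUnion_subst_vars θ L hL]
      intro v hv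
      simp only [Set.mem_iUnion, exists_prop] at hv
      obtain ⟨x, hx, hv⟩ := hv
      refine ⟨x, ?_, (hg x v hv).symm⟩
      simpa using hx
    calc (⋃ A ∈ L, ((A.subst θ).vars)).ncard
        ≤ (g '' (⋃ A ∈ L, FOAtom.vars A)).ncard := Set.ncard_le_ncard hsub (hfin.image g)
      _ ≤ (⋃ A ∈ L, FOAtom.vars A).ncard := Set.ncard_image_le hfin
      _ ≤ w := hw
  have c5 : (varsOf Bset).ncard ≤ wb := by rw [c1]; exact hcard β hffβ wb hwb
  have c6 : (varsOf Hset).ncard ≤ wh := by rw [c2]; exact hcard η hffη wh hwh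
  -- Conclusion 7
  have c7 : ∀ A, (A ∈ Bset ∨ A ∈ Hset) → A.NoFunc := by
    intro A hAm
    rcases hAm with hAm | hAm
    · rw [hBset] at hAm
      simp only [Set.mem_union, Set.mem_setOf_eq] at hAm
      rcases hAm with ⟨B, hB, rfl⟩ | ⟨B, hB, _, rfl⟩
      · exact subst_noFunc θ hθff (hffβ B hB)
      · exact subst_noFunc θ hθff (hffβ' B hB)
    · rw [hHset] at hAm
      simp only [Set.mem_union, Set.mem_setOf_eq] at hAm
      rcases hAm with ⟨D, hDm, rfl⟩ | ⟨D, hDm, rfl⟩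
      · exact subst_noFunc θ hθff (hffη D hDm)
      · exact subst_noFunc θ hθff (hffη' D hDm)
  exact ⟨c1, c2, ⟨c3a, c3b⟩, c4, c5, c6, c7⟩

end Stmt12
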